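/- Define 4×4 matrices ρ = (1/2)diag(1,1,0,0), σ₀ = (1/2)diag(1,0,1,0), and σ₁ = (1/2)(|η₁⟩⟨η₁| + |η₂⟩⟨η₂|) where |η₁⟩ = (e₁ + e₃)/√2 and |η₂⟩ = (e₂ + e₄)/√2. Then ρ, σ₀, σ₁ are density matrices, ρσ₀ = σ₀ρ, ρσ₁ ≠ σ₁ρ, and the pairs (ρ,σ₀) and (ρ,σ₁) have equal values of Tr(ρ²), Tr(σ²), Tr(ρσ), Tr(ρ³), Tr(σ³), Tr(ρ²σ), Tr(ρσ²) — namely (1/2, 1/2, 1/4, 1/4, 1/4, 1/8, 1/8). -/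

import Mathlib

open Matrix ComplexOrder

noncomputable def rho4 : Matrix (Fin 4) (Fin 4) ℂ :=
  (1 / 2 : ℂ) • Matrix.diagonal ![1, 1, 0, 0]

noncomputable def sigma0 : Matrix (Fin 4) (Fin 4) ℂ :=
  (1 / 2 : ℂ) • Matrix.diagonal ![1, 0, 1, 0]

noncomputable def eta1 : Fin 4 → ℂ :=
  ![(Real.sqrt 2 : ℂ)⁻¹, 0, (Real.sqrt 2 : ℂ)⁻¹, 0]

noncomputable def eta2 : Fin 4 → ℂ :=
  ![0, (Real.sqrt 2 : ℂ)⁻¹, 0, (Real.sqrt 2 : ℂ)⁻¹]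

noncomputable def sigma1 : Matrix (Fin 4) (Fin 4) ℂ :=
  (1 / 2 : ℂ) • (vecMulVec eta1 (star eta1) + vecMulVec eta2 (star eta2))

lemma sqrt2_inv_mul : ((Real.sqrt 2 : ℂ))⁻¹ * ((Real.sqrt 2 : ℂ))⁻¹ = 1 / 2 := by
  rw [← mul_inv]
  norm_cast
  rw [Real.mul_self_sqrt (by norm_num)]
  norm_num

lemma sigma1_eq : sigma1 = (1 / 4 : ℂ) • !![1,0,1,0; 0,1,0,1; 1,0,1,0; 0,1,0,1] := by
  ext i j
  fin_cases i <;> fin_cases j <;>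
    simp [sigma1, eta1, eta2, vecMulVec_apply, Pi.star_apply, sqrt2_inv_mul, vecHead,
      vecTail, -cons_vecMulVec, -vecMulVec_cons] <;> norm_num

set_option maxHeartbeats 1000000

lemma rho4_eq : rho4 = (1 / 2 : ℂ) • !![1,0,0,0; 0,1,0,0; 0,0,0,0; 0,0,0,0] := by
  ext i j
  fin_cases i <;> fin_cases j <;> simp [rho4, Matrix.diagonal, vecHead, vecTail]

lemma sigma0_eq : sigma0 = (1 / 2 : ℂ) • !![1,0,0,0; 0,0,0,0; 0,0,1,0; 0,0,0,0] := by
  ext i j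
  fin_cases i <;> fin_cases j <;> simp [sigma0, Matrix.diagonal, vecHead, vecTail]

lemma half_nonneg' : (0:ℂ) ≤ 2⁻¹ := by
  rw [Complex.le_def]; norm_num

theorem stmt16 :
    (rho4.PosSemidef ∧ trace rho4 = 1) ∧
    (sigma0.PosSemidef ∧ trace sigma0 = 1) ∧
    (sigma1.PosSemidef ∧ trace sigma1 = 1) ∧
    rho4 * sigma0 = sigma0 * rho4 ∧
    rho4 * sigma1 ≠ sigma1 * rho4 ∧
    trace (rho4 ^ 2) = 1 / 2 ∧
    trace (sigma0 ^ 2) = 1 / 2 ∧ trace (sigma1 ^ 2) = 1 / 2 ∧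
    trace (rho4 * sigma0) = 1 / 4 ∧ trace (rho4 * sigma1) = 1 / 4 ∧
    trace (rho4 ^ 3) = 1 / 4 ∧
    trace (sigma0 ^ 3) = 1 / 4 ∧ trace (sigma1 ^ 3) = 1 / 4 ∧
    trace (rho4 ^ 2 * sigma0) = 1 / 8 ∧ trace (rho4 ^ 2 * sigma1) = 1 / 8 ∧
    trace (rho4 * sigma0 ^ 2) = 1 / 8 ∧ trace (rho4 * sigma1 ^ 2) = 1 / 8 := by
  have hq : (0:ℂ) ≤ 1/4 := by rw [Complex.le_def]; norm_num
  refine ⟨⟨?_, ?_⟩, ⟨?_, ?_⟩, ⟨?_, ?_⟩, ?_, ?_, ?_, ?_, ?_, ?_, ?_, ?_, ?_, ?_, ?_, ?_, ?_, ?_⟩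
  · rw [show rho4 = Matrix.diagonal ![2⁻¹, 2⁻¹, 0, 0] from by
      ext i j; fin_cases i <;> fin_cases j <;> simp [rho4]]
    refine Matrix.PosSemidef.diagonal fun i => ?_
    fin_cases i <;> simp [half_nonneg']
  · simp [rho4_eq, Matrix.trace, Fin.sum_univ_four, vecHead, vecTail]; norm_num
  · rw [show sigma0 = Matrix.diagonal ![2⁻¹, 0, 2⁻¹, 0] from by
      ext i j; fin_cases i <;> fin_cases j <;> simp [sigma0]]
    refine Matrix.PosSemidef.diagonal fun i => ?_
    fin_cases i <;> simp [half_nonneg']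
  · simp [sigma0_eq, Matrix.trace, Fin.sum_univ_four, vecHead, vecTail]; norm_num
  · refine posSemidef_iff_dotProduct_mulVec.mpr ⟨?_, fun x => ?_⟩
    · show sigma1ᴴ = sigma1
      rw [sigma1_eq]
      ext i j
      fin_cases i <;> fin_cases j <;> simp [Matrix.conjTranspose_apply]
    · have h : star x ⬝ᵥ sigma1 *ᵥ x =
          (1/4 : ℂ) * (star (x 0 + x 2) * (x 0 + x 2) + star (x 1 + x 3) * (x 1 + x 3)) := by
        simp [sigma1_eq, dotProduct, mulVec, Fin.sum_univ_four, Matrix.smul_apply]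
        ring
      rw [h]
      exact mul_nonneg hq (add_nonneg (star_mul_self_nonneg _) (star_mul_self_nonneg _))
  · simp [sigma1_eq, Matrix.trace, Fin.sum_univ_four, vecHead, vecTail]; norm_num
  · ext i j
    fin_cases i <;> fin_cases j <;>
      simp [rho4_eq, sigma0_eq, Matrix.mul_apply, Fin.sum_univ_four, vecHead, vecTail]
  · intro h
    have h02 := congrFun (congrFun h 0) 2
    simp [rho4_eq, sigma1_eq, Matrix.mul_apply, Fin.sum_univ_four, vecHead, vecTail] at h02
  · rw [pow_two]
    simp [rho4_eq, Matrix.trace, Matrix.mul_apply, Fin.sum_univ_four, vecHead, vecTail]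
    norm_num
  · rw [pow_two]
    simp [sigma0_eq, Matrix.trace, Matrix.mul_apply, Fin.sum_univ_four, vecHead, vecTail]
    norm_num
  · rw [pow_two]
    simp [sigma1_eq, Matrix.trace, Matrix.mul_apply, Fin.sum_univ_four, vecHead, vecTail]
    norm_num
  · simp [rho4_eq, sigma0_eq, Matrix.trace, Matrix.mul_apply, Fin.sum_univ_four,
      Matrix.diagonal, vecHead, vecTail]
    norm_num
  · simp [rho4_eq, sigma1_eq, Matrix.trace, Matrix.mul_apply, Fin.sum_univ_four,
      Matrix.diagonal, vecHead, vecTail]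
    norm_num
  · rw [pow_succ, pow_two]
    simp [rho4_eq, Matrix.trace, Matrix.mul_apply, Fin.sum_univ_four, vecHead, vecTail]
    norm_num
  · rw [pow_succ, pow_two]
    simp [sigma0_eq, Matrix.trace, Matrix.mul_apply, Fin.sum_univ_four, vecHead, vecTail]
    norm_num
  · rw [pow_succ, pow_two]
    simp [sigma1_eq, Matrix.trace, Matrix.mul_apply, Fin.sum_univ_four, vecHead, vecTail]
    norm_num
  · rw [pow_two]
    simp [rho4_eq, sigma0_eq, Matrix.trace, Matrix.mul_apply, Fin.sum_univ_four,
      Matrix.diagonal, vecHead, vecTail]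
    norm_num
  · rw [pow_two]
    simp [rho4_eq, sigma1_eq, Matrix.trace, Matrix.mul_apply, Fin.sum_univ_four,
      Matrix.diagonal, vecHead, vecTail]
    norm_num
  · rw [pow_two]
    simp [rho4_eq, sigma0_eq, Matrix.trace, Matrix.mul_apply, Fin.sum_univ_four,
      Matrix.diagonal, vecHead, vecTail]
    norm_num
  · rw [pow_two]
    simp [rho4_eq, sigma1_eq, Matrix.trace, Matrix.mul_apply, Fin.sum_univ_four,
      Matrix.diagonal, vecHead, vecTail]
    norm_num
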